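/- Define m(k) := √(tanh(k)/k) for k > 0, g(k) := √(k·tanh(k)) − k, and Γ(k) := 2(m(k) − m(2k)) + g'(k), where g' denotes the derivative of g. Then Γ(1) > 0 and Γ(2) < 0; consequently, by continuity of Γ on (0,∞), there exists k* ∈ (1,2) with Γ(k*) = 0. -/

import Mathlib

open Real

private lemma tanh_exp (x : ℝ) :
    Real.tanh x = (Real.exp x * Real.exp x - 1) / (Real.exp x * Real.exp x + 1) := by
  have hE : Real.exp x ≠ 0 := (Real.exp_pos x).ne'
  have hD : Real.exp x + Real.exp (-x) ≠ 0 := by positivity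
  rw [Real.tanh_eq_sinh_div_cosh, Real.sinh_eq, Real.cosh_eq, Real.exp_neg]
  rw [div_eq_div_iff (by positivity) (by positivity)]
  field_simp

private lemma my_hasDerivAt_tanh (x : ℝ) :
    HasDerivAt Real.tanh (1 - Real.tanh x ^ 2) x := by
  have h := (Real.hasDerivAt_sinh x).div (Real.hasDerivAt_cosh x) (Real.cosh_pos x).ne'
  have : Real.tanh = fun y => Real.sinh y / Real.cosh y := funext Real.tanh_eq_sinh_div_cosh
  rw [this]
  refine h.congr_deriv ?_
  have hc := (Real.cosh_pos x).ne'
  field_simp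

private lemma tanh_pos' {k : ℝ} (hk : 0 < k) : 0 < Real.tanh k := by
  rw [Real.tanh_eq_sinh_div_cosh]
  exact div_pos (Real.sinh_pos_iff.mpr hk) (Real.cosh_pos k)

private lemma deriv_g_eq {k : ℝ} (hk : 0 < k) :
    deriv (fun x => Real.sqrt (x * Real.tanh x) - x) k =
      (Real.tanh k + k * (1 - Real.tanh k ^ 2)) / (2 * Real.sqrt (k * Real.tanh k)) - 1 := by
  have hpos : 0 < k * Real.tanh k := mul_pos hk (tanh_pos' hk)
  have h1 : HasDerivAt (fun x => x * Real.tanh x)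
      (Real.tanh k + k * (1 - Real.tanh k ^ 2)) k := by
    have := (hasDerivAt_id' k).mul (my_hasDerivAt_tanh k)
    exact this.congr_deriv (by ring)
  have h2 := (Real.hasDerivAt_sqrt hpos.ne').comp k h1
  have h3 := h2.sub (hasDerivAt_id k)
  have h4 : HasDerivAt (fun x => Real.sqrt (x * Real.tanh x) - x)
      ((Real.tanh k + k * (1 - Real.tanh k ^ 2)) / (2 * Real.sqrt (k * Real.tanh k)) - 1) k := by
    refine h3.congr_deriv ?_
    ring
  exact h4.deriv

set_option maxHeartbeats 1000000 in
/-- Sign change of the Whitham modulational instability function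
`Γ(k) = 2(m(k) − m(2k)) + g'(k)`, with `m(k) = √(tanh k / k)` and
`g(k) = √(k tanh k) − k`: `Γ(1) > 0`, `Γ(2) < 0`, hence `Γ` vanishes at some
`k* ∈ (1,2)`. -/
theorem stmt_16 (m g Γ : ℝ → ℝ)
    (hm : ∀ k : ℝ, m k = Real.sqrt (Real.tanh k / k))
    (hg : ∀ k : ℝ, g k = Real.sqrt (k * Real.tanh k) - k)
    (hΓ : ∀ k : ℝ, Γ k = 2 * (m k - m (2 * k)) + deriv g k) :
    0 < Γ 1 ∧ Γ 2 < 0 ∧ ∃ kstar ∈ Set.Ioo (1 : ℝ) 2, Γ kstar = 0 := by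
  have hgfun : g = fun x => Real.sqrt (x * Real.tanh x) - x := funext hg
  -- numeric bounds on exp
  have he1 := Real.exp_one_gt_d9
  have he2 := Real.exp_one_lt_d9
  have hex2 : Real.exp 2 = Real.exp 1 * Real.exp 1 := by
    rw [← Real.exp_add]; norm_num
  have hex4 : Real.exp 4 = Real.exp 2 * Real.exp 2 := by
    rw [← Real.exp_add]; norm_num
  have hE2l : (7.389056098:ℝ) < Real.exp 2 := by rw [hex2]; nlinarith
  have hE2u : Real.exp 2 < (7.3890561:ℝ) := by rw [hex2]; nlinarith
  have hE4l : (54.59815002:ℝ) < Real.exp 4 := by rw [hex4]; nlinarith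
  have hE4u : Real.exp 4 < (54.59815005:ℝ) := by rw [hex4]; nlinarith
  -- bounds on tanh 1, tanh 2, tanh 4
  have ht1l : (0.761593:ℝ) < Real.tanh 1 := by
    rw [tanh_exp, lt_div_iff₀ (by positivity)]; nlinarith
  have ht1u : Real.tanh 1 < (0.761595:ℝ) := by
    rw [tanh_exp, div_lt_iff₀ (by positivity)]; nlinarith
  have ht2l : (0.96402:ℝ) < Real.tanh 2 := by
    rw [tanh_exp, lt_div_iff₀ (by positivity)]; nlinarith
  have ht2u : Real.tanh 2 < (0.96403:ℝ) := by
    rw [tanh_exp, div_lt_iff₀ (by positivity)]; nlinarith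
  have ht4l : (0.999329:ℝ) < Real.tanh 4 := by
    rw [tanh_exp, lt_div_iff₀ (by positivity)]; nlinarith
  have ht4u : Real.tanh 4 < (0.99933:ℝ) := by
    rw [tanh_exp, div_lt_iff₀ (by positivity)]; nlinarith
  clear he1 he2 hex2 hex4 hE2l hE2u hE4l hE4u
  -- bounds on sqrt quantities
  have hs1l : (0.872692:ℝ) < Real.sqrt (Real.tanh 1) := by
    rw [Real.lt_sqrt (by norm_num)]; nlinarith
  have hs1u : Real.sqrt (Real.tanh 1) < (0.872695:ℝ) := by
    rw [Real.sqrt_lt' (by norm_num)]; nlinarith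
  have hs2l : (0.694268:ℝ) < Real.sqrt (Real.tanh 2 / 2) := by
    rw [Real.lt_sqrt (by norm_num)]; nlinarith
  have hs2u : Real.sqrt (Real.tanh 2 / 2) < (0.694275:ℝ) := by
    rw [Real.sqrt_lt' (by norm_num)]; nlinarith
  have hs4l : (0.499831:ℝ) < Real.sqrt (Real.tanh 4 / 4) := by
    rw [Real.lt_sqrt (by norm_num)]; nlinarith
  have hs4u : Real.sqrt (Real.tanh 4 / 4) < (0.499834:ℝ) := by
    rw [Real.sqrt_lt' (by norm_num)]; nlinarith
  have hs3l : (1.388537:ℝ) < Real.sqrt (2 * Real.tanh 2) := by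
    rw [Real.lt_sqrt (by norm_num)]; nlinarith
  have hs3u : Real.sqrt (2 * Real.tanh 2) < (1.388551:ℝ) := by
    rw [Real.sqrt_lt' (by norm_num)]; nlinarith
  -- Γ 1 > 0
  have hd1 : deriv g 1 =
      (Real.tanh 1 + 1 * (1 - Real.tanh 1 ^ 2)) / (2 * Real.sqrt (1 * Real.tanh 1)) - 1 := by
    rw [hgfun]; exact deriv_g_eq one_pos
  have hG1 : 0 < Γ 1 := by
    rw [hΓ, hm, hm, hd1]
    simp only [show (2:ℝ) * 1 = 2 by norm_num, div_one, one_mul]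
    have key : (0.676963:ℝ) <
        (Real.tanh 1 + (1 - Real.tanh 1 ^ 2)) / (2 * Real.sqrt (Real.tanh 1)) := by
      rw [lt_div_iff₀ (by positivity)]; nlinarith
    nlinarith [key, hs1l, hs2u]
  -- Γ 2 < 0
  have hd2 : deriv g 2 =
      (Real.tanh 2 + 2 * (1 - Real.tanh 2 ^ 2)) / (2 * Real.sqrt (2 * Real.tanh 2)) - 1 := by
    rw [hgfun]; exact deriv_g_eq two_pos
  have hG2 : Γ 2 < 0 := by
    rw [hΓ, hm, hm, hd2]
    simp only [show (2:ℝ) * 2 = 4 by norm_num]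
    have key : (Real.tanh 2 + 2 * (1 - Real.tanh 2 ^ 2)) / (2 * Real.sqrt (2 * Real.tanh 2))
        < (0.39803:ℝ) := by
      rw [div_lt_iff₀ (by positivity)]; nlinarith
    nlinarith [key, hs2u, hs4l]
  -- continuity and IVT
  have htanh_cont : Continuous Real.tanh := by
    have h : Real.tanh = fun x => Real.sinh x / Real.cosh x :=
      funext Real.tanh_eq_sinh_div_cosh
    rw [h]
    exact Real.continuous_sinh.div Real.continuous_cosh fun x => (Real.cosh_pos x).ne'
  set F : ℝ → ℝ := fun k =>
    2 * (Real.sqrt (Real.tanh k / k) - Real.sqrt (Real.tanh (2 * k) / (2 * k))) +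
      ((Real.tanh k + k * (1 - Real.tanh k ^ 2)) / (2 * Real.sqrt (k * Real.tanh k)) - 1)
    with hF
  have hFc : ContinuousOn F (Set.Icc 1 2) := by
    have hk0 : ∀ k ∈ Set.Icc (1:ℝ) 2, k ≠ 0 := fun k hk => by
      have := hk.1; positivity
    have h2k0 : ∀ k ∈ Set.Icc (1:ℝ) 2, (2:ℝ) * k ≠ 0 := fun k hk => by
      have := hk.1; positivity
    have c1 : ContinuousOn (fun k => Real.sqrt (Real.tanh k / k)) (Set.Icc 1 2) :=
      Real.continuous_sqrt.comp_continuousOn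
        (htanh_cont.continuousOn.div continuousOn_id hk0)
    have c2 : ContinuousOn (fun k => Real.sqrt (Real.tanh (2 * k) / (2 * k))) (Set.Icc 1 2) :=
      Real.continuous_sqrt.comp_continuousOn
        (((htanh_cont.comp (continuous_const.mul continuous_id)).continuousOn).div
          (continuous_const.mul continuous_id).continuousOn h2k0)
    have cnum : Continuous (fun k => Real.tanh k + k * (1 - Real.tanh k ^ 2)) := by
      continuity
    have cden : ContinuousOn (fun k => 2 * Real.sqrt (k * Real.tanh k)) (Set.Icc 1 2) :=
      (continuous_const.mul (Real.continuous_sqrt.comp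
        (continuous_id.mul htanh_cont))).continuousOn
    have hden0 : ∀ k ∈ Set.Icc (1:ℝ) 2, 2 * Real.sqrt (k * Real.tanh k) ≠ 0 := by
      intro k hk
      have hkpos : (0:ℝ) < k := lt_of_lt_of_le one_pos hk.1
      have : 0 < k * Real.tanh k := mul_pos hkpos (tanh_pos' hkpos)
      have := Real.sqrt_pos.mpr this
      positivity
    exact ((continuousOn_const.mul (c1.sub c2)).add
      ((cnum.continuousOn.div cden hden0).sub continuousOn_const))
  have hEq : Set.EqOn Γ F (Set.Icc 1 2) := by
    intro k hk
    have hkpos : (0:ℝ) < k := lt_of_lt_of_le one_pos hk.1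
    rw [hΓ, hm, hm, hgfun, deriv_g_eq hkpos]
  have hΓc : ContinuousOn Γ (Set.Icc 1 2) := hFc.congr hEq
  have hIoo : (0:ℝ) ∈ Set.Ioo (Γ 2) (Γ 1) := ⟨hG2, hG1⟩
  obtain ⟨k, hkmem, hkeq⟩ := intermediate_value_Ioo' (by norm_num : (1:ℝ) ≤ 2) hΓc hIoo
  exact ⟨hG1, hG2, k, hkmem, hkeq⟩
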